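/- Let Φ : X ⇉ Y be a positively homogeneous set-valued mapping between normed spaces. Then Φ is strongly metrically subregular at (0, 0) if and only if α(Φ) = inf_{‖u‖=1} dist(0, Φ(u)) > 0, and in that case subreg Φ(0, 0) = 1/α(Φ). -/

import Mathlib

open Filter Topology Metric Set ENNReal Pointwise

/-- Strong metric subregularity of a set-valued map between metric spaces. -/
def IsStronglyMetricallySubregular {X Y : Type*} [MetricSpace X] [MetricSpace Y]
    (F : X → Set Y) (xb : X) (yb : Y) : Prop :=
  ∃ κ : ℝ, 0 ≤ κ ∧ ∃ r : ℝ, 0 < r ∧ ∀ x ∈ Metric.closedBall xb r,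
    ENNReal.ofReal (dist x xb) ≤ ENNReal.ofReal κ * EMetric.infEdist yb (F x)

/-- The modulus of subregularity of a set-valued map. -/
noncomputable def subregMod {X Y : Type*} [MetricSpace X] [MetricSpace Y]
    (F : X → Set Y) (xb : X) (yb : Y) : ℝ :=
  sInf {κ : ℝ | 0 ≤ κ ∧ ∃ r : ℝ, 0 < r ∧ ∀ x ∈ Metric.closedBall xb r,
    ENNReal.ofReal (dist x xb) ≤ ENNReal.ofReal κ * EMetric.infEdist yb (F x)}

/-- The injectivity constant `α(Φ) = inf_{‖u‖=1} dist(0, Φ u)` of a set-valued map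
between normed spaces (extended-real-valued; `+∞` over the empty sphere). -/
noncomputable def injConstSV {X Y : Type*}
    [NormedAddCommGroup X] [NormedAddCommGroup Y] (Φ : X → Set Y) : ℝ≥0∞ :=
  ⨅ u : {u : X // ‖u‖ = 1}, EMetric.infEdist (0 : Y) (Φ u.1)

section Aux
variable {X Y : Type*} [NormedAddCommGroup X] [NormedSpace ℝ X]
  [NormedAddCommGroup Y] [NormedSpace ℝ Y]

lemma infEdist_zero_smul_aux {t : ℝ} (ht : 0 < t) (s : Set Y) :
    EMetric.infEdist (0 : Y) (t • s) = ENNReal.ofReal t * EMetric.infEdist (0 : Y) s := by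
  have h := infEdist_smul₀ (c := t) (E := Y) ht.ne' s 0
  rw [smul_zero] at h
  show infEDist _ _ = _ * infEDist _ _
  rw [h, ENNReal.smul_def, smul_eq_mul, ← enorm_eq_nnnorm, Real.enorm_eq_ofReal ht.le]

lemma mem_S_iff_aux (Φ : X → Set Y)
    (hΦh : ∀ t : ℝ, 0 < t → ∀ x : X, Φ (t • x) = t • Φ x) (κ : ℝ) :
    (0 ≤ κ ∧ ∃ r : ℝ, 0 < r ∧ ∀ x ∈ Metric.closedBall (0 : X) r,
      ENNReal.ofReal (dist x 0) ≤ ENNReal.ofReal κ * EMetric.infEdist (0 : Y) (Φ x)) ↔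
    (0 ≤ κ ∧ ∀ u : X, ‖u‖ = 1 →
      1 ≤ ENNReal.ofReal κ * EMetric.infEdist (0 : Y) (Φ u)) := by
  constructor
  · rintro ⟨hκ, r, hr, h⟩
    refine ⟨hκ, fun u hu => ?_⟩
    have hx : ‖r • u‖ = r := by
      rw [norm_smul, hu, mul_one, Real.norm_of_nonneg hr.le]
    have hmem : r • u ∈ Metric.closedBall (0 : X) r := by
      simp [Metric.mem_closedBall, dist_zero_right, hx]
    have h2 := h _ hmem
    rw [dist_zero_right, hx, hΦh r hr u, infEdist_zero_smul_aux hr] at h2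
    have h3 : ENNReal.ofReal r * 1 ≤
        ENNReal.ofReal r * (ENNReal.ofReal κ * EMetric.infEdist (0 : Y) (Φ u)) := by
      rw [mul_one]
      calc ENNReal.ofReal r ≤ ENNReal.ofReal κ * (ENNReal.ofReal r *
            EMetric.infEdist (0 : Y) (Φ u)) := h2
        _ = ENNReal.ofReal r * (ENNReal.ofReal κ * EMetric.infEdist (0 : Y) (Φ u)) := by
            ring
    exact (ENNReal.mul_le_mul_iff_right (by simp [hr]) ENNReal.ofReal_ne_top).mp h3
  · rintro ⟨hκ, h⟩
    refine ⟨hκ, 1, one_pos, fun x _ => ?_⟩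
    rcases eq_or_ne x 0 with rfl | hx
    · simp
    · have hn : (0 : ℝ) < ‖x‖ := norm_pos_iff.mpr hx
      have hu : ‖‖x‖⁻¹ • x‖ = 1 := by
        rw [norm_smul, norm_inv, norm_norm, inv_mul_cancel₀ hn.ne']
      have hΦx : Φ x = ‖x‖ • Φ (‖x‖⁻¹ • x) := by
        rw [← hΦh ‖x‖ hn, smul_inv_smul₀ hn.ne']
      rw [dist_zero_right, hΦx, infEdist_zero_smul_aux hn]
      calc ENNReal.ofReal ‖x‖ = ENNReal.ofReal ‖x‖ * 1 := (mul_one _).symm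
        _ ≤ ENNReal.ofReal ‖x‖ *
            (ENNReal.ofReal κ * EMetric.infEdist (0 : Y) (Φ (‖x‖⁻¹ • x))) :=
          mul_le_mul_right (h _ hu) _
        _ = ENNReal.ofReal κ * (ENNReal.ofReal ‖x‖ *
            EMetric.infEdist (0 : Y) (Φ (‖x‖⁻¹ • x))) := by ring

end Aux

/-- A positively homogeneous set-valued map `Φ` between normed
spaces is strongly metrically subregular at `(0, 0)` iff `α(Φ) > 0`, in which case
`subreg Φ(0, 0) = 1/α(Φ)`. -/
theorem strong_subreg_posHom_iff {X Y : Type*}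
    [NormedAddCommGroup X] [NormedSpace ℝ X] [NormedAddCommGroup Y] [NormedSpace ℝ Y]
    (Φ : X → Set Y) (hΦ0 : (0 : Y) ∈ Φ 0)
    (hΦh : ∀ t : ℝ, 0 < t → ∀ x : X, Φ (t • x) = t • Φ x) :
    (IsStronglyMetricallySubregular Φ (0 : X) (0 : Y) ↔ 0 < injConstSV Φ) ∧
    (0 < injConstSV Φ →
      ENNReal.ofReal (subregMod Φ (0 : X) (0 : Y)) = 1 / injConstSV Φ) := by
  set D : {u : X // ‖u‖ = 1} → ℝ≥0∞ := fun u => EMetric.infEdist (0 : Y) (Φ u.1) with hD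
  have hαD : injConstSV Φ = ⨅ u, D u := rfl
  -- A general fact: for every κ satisfying the unit-sphere condition, 1/α ≤ ofReal κ
  have key_lb : ∀ κ : ℝ, (∀ u : X, ‖u‖ = 1 →
      1 ≤ ENNReal.ofReal κ * EMetric.infEdist (0 : Y) (Φ u)) →
      1 / injConstSV Φ ≤ ENNReal.ofReal κ := by
    intro κ h
    rw [hαD, one_div, ENNReal.inv_iInf]
    refine iSup_le fun u => ?_
    have h1 := h u.1 u.2
    show (EMetric.infEdist (0 : Y) (Φ u.1))⁻¹ ≤ ENNReal.ofReal κ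
    rcases eq_or_ne (EMetric.infEdist (0 : Y) (Φ u.1)) ⊤ with hDu | hDu
    · simp [hDu]
    · have hD0 : EMetric.infEdist (0 : Y) (Φ u.1) ≠ 0 := by
        intro h0
        rw [h0, mul_zero] at h1
        exact (by norm_num : ¬ (1 : ℝ≥0∞) ≤ 0) h1
      calc (EMetric.infEdist (0 : Y) (Φ u.1))⁻¹
          = 1 * (EMetric.infEdist (0 : Y) (Φ u.1))⁻¹ := (one_mul _).symm
        _ ≤ (ENNReal.ofReal κ * EMetric.infEdist (0 : Y) (Φ u.1)) *
            (EMetric.infEdist (0 : Y) (Φ u.1))⁻¹ := mul_le_mul_left h1 _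
        _ = ENNReal.ofReal κ * (EMetric.infEdist (0 : Y) (Φ u.1) *
            (EMetric.infEdist (0 : Y) (Φ u.1))⁻¹) := mul_assoc _ _ _
        _ = ENNReal.ofReal κ := by rw [ENNReal.mul_inv_cancel hD0 hDu, mul_one]
  -- In the presence of a unit vector, κ must be nonzero
  have key_ne : ∀ κ : ℝ, (∀ u : X, ‖u‖ = 1 →
      1 ≤ ENNReal.ofReal κ * EMetric.infEdist (0 : Y) (Φ u)) →
      ∀ u : X, ‖u‖ = 1 → ENNReal.ofReal κ ≠ 0 := by
    intro κ h u hu h0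
    have := h u hu
    rw [h0, zero_mul] at this
    exact (by norm_num : ¬ (1 : ℝ≥0∞) ≤ 0) this
  -- If α > 0, any κ with ofReal κ ≥ 1/α and κ > 0 satisfies the condition
  have key_ub : ∀ κ : ℝ, 0 < κ → 0 < injConstSV Φ →
      1 / injConstSV Φ ≤ ENNReal.ofReal κ →
      ∀ u : X, ‖u‖ = 1 → 1 ≤ ENNReal.ofReal κ * EMetric.infEdist (0 : Y) (Φ u) := by
    intro κ hκ hα hle u hu
    have hαu : injConstSV Φ ≤ EMetric.infEdist (0 : Y) (Φ u) := iInf_le D ⟨u, hu⟩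
    have h1 : 1 / EMetric.infEdist (0 : Y) (Φ u) ≤ ENNReal.ofReal κ := by
      refine le_trans ?_ hle
      rw [one_div, one_div]
      exact ENNReal.inv_le_inv.mpr hαu
    have h1' : (EMetric.infEdist (0 : Y) (Φ u))⁻¹ ≤ ENNReal.ofReal κ := by
      rwa [one_div] at h1
    rcases eq_or_ne (EMetric.infEdist (0 : Y) (Φ u)) ⊤ with hDu | hDu
    · rw [hDu, ENNReal.mul_top (by simp [hκ])]
      exact le_top
    · have hD0 : EMetric.infEdist (0 : Y) (Φ u) ≠ 0 := (lt_of_lt_of_le hα hαu).ne'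
      calc (1 : ℝ≥0∞) = EMetric.infEdist (0 : Y) (Φ u) *
            (EMetric.infEdist (0 : Y) (Φ u))⁻¹ := (ENNReal.mul_inv_cancel hD0 hDu).symm
        _ ≤ EMetric.infEdist (0 : Y) (Φ u) * ENNReal.ofReal κ := mul_le_mul_right h1' _
        _ = ENNReal.ofReal κ * EMetric.infEdist (0 : Y) (Φ u) := mul_comm _ _
  constructor
  · constructor
    · rintro ⟨κ, hκ, hr⟩
      have hcond := ((mem_S_iff_aux Φ hΦh κ).mp ⟨hκ, hr⟩).2
      rcases isEmpty_or_nonempty {u : X // ‖u‖ = 1} with he | hne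
      · rw [hαD, iInf_of_empty]; exact ENNReal.zero_lt_top
      · obtain ⟨u0⟩ := hne
        have hκ0 := key_ne κ hcond u0.1 u0.2
        have : (ENNReal.ofReal κ)⁻¹ ≤ injConstSV Φ := by
          rw [hαD]
          refine le_iInf fun u => ?_
          have h1 := hcond u.1 u.2
          show (ENNReal.ofReal κ)⁻¹ ≤ EMetric.infEdist (0 : Y) (Φ u.1)
          calc (ENNReal.ofReal κ)⁻¹ = (ENNReal.ofReal κ)⁻¹ * 1 := (mul_one _).symm
            _ ≤ (ENNReal.ofReal κ)⁻¹ * (ENNReal.ofReal κ *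
                EMetric.infEdist (0 : Y) (Φ u.1)) := mul_le_mul_right h1 _
            _ = ((ENNReal.ofReal κ)⁻¹ * ENNReal.ofReal κ) *
                EMetric.infEdist (0 : Y) (Φ u.1) := (mul_assoc _ _ _).symm
            _ = EMetric.infEdist (0 : Y) (Φ u.1) := by
                rw [ENNReal.inv_mul_cancel hκ0 ENNReal.ofReal_ne_top, one_mul]
        exact lt_of_lt_of_le (ENNReal.inv_pos.mpr ENNReal.ofReal_ne_top) this
    · intro hα
      set t : ℝ := (1 / injConstSV Φ).toReal with ht
      have h1α : 1 / injConstSV Φ ≠ ⊤ := by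
        rw [one_div]
        exact ENNReal.inv_ne_top.mpr hα.ne'
      have hmem : 1 / injConstSV Φ ≤ ENNReal.ofReal (t + 1) := by
        calc 1 / injConstSV Φ = ENNReal.ofReal t := (ENNReal.ofReal_toReal h1α).symm
          _ ≤ ENNReal.ofReal (t + 1) := ENNReal.ofReal_le_ofReal (by linarith)
      have htpos : 0 < t + 1 := by positivity
      obtain ⟨_, r, hr, h⟩ := (mem_S_iff_aux Φ hΦh (t + 1)).mpr
        ⟨htpos.le, key_ub (t + 1) htpos hα hmem⟩
      exact ⟨t + 1, htpos.le, r, hr, h⟩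
  · intro hα
    set t : ℝ := (1 / injConstSV Φ).toReal with ht
    have h1α : 1 / injConstSV Φ ≠ ⊤ := by
      rw [one_div]; exact ENNReal.inv_ne_top.mpr hα.ne'
    set S : Set ℝ := {κ : ℝ | 0 ≤ κ ∧ ∃ r : ℝ, 0 < r ∧ ∀ x ∈ Metric.closedBall (0 : X) r,
      ENNReal.ofReal (dist x 0) ≤ ENNReal.ofReal κ * EMetric.infEdist (0 : Y) (Φ x)} with hS
    have hSmem : ∀ ε : ℝ, 0 < ε → t + ε ∈ S := by
      intro ε hε
      have htpos : 0 < t + ε := by positivity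
      have hmem : 1 / injConstSV Φ ≤ ENNReal.ofReal (t + ε) := by
        calc 1 / injConstSV Φ = ENNReal.ofReal t := (ENNReal.ofReal_toReal h1α).symm
          _ ≤ ENNReal.ofReal (t + ε) := ENNReal.ofReal_le_ofReal (by linarith)
      exact (mem_S_iff_aux Φ hΦh (t + ε)).mpr
        ⟨htpos.le, key_ub (t + ε) htpos hα hmem⟩
    have hlb : ∀ κ ∈ S, t ≤ κ := by
      intro κ hκS
      obtain ⟨hκ, hcond⟩ := (mem_S_iff_aux Φ hΦh κ).mp hκS
      have := key_lb κ hcond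
      calc t = (1 / injConstSV Φ).toReal := ht
        _ ≤ (ENNReal.ofReal κ).toReal := ENNReal.toReal_mono ENNReal.ofReal_ne_top this
        _ = κ := ENNReal.toReal_ofReal hκ
    have heq : subregMod Φ (0 : X) (0 : Y) = t := by
      have h1 : subregMod Φ (0 : X) (0 : Y) = sInf S := rfl
      rw [h1]
      refine le_antisymm ?_ (le_csInf ⟨t + 1, hSmem 1 one_pos⟩ hlb)
      refine le_of_forall_pos_le_add fun ε hε => ?_
      exact csInf_le ⟨t, hlb⟩ (hSmem ε hε)
    rw [heq, ENNReal.ofReal_toReal h1α]
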